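/- (Flat band criterion) Let p ∈ ℤ and q ∈ ℕ* be relatively prime, γ = 2πp/q, ω ∈ ℝ, and let Q_ω be the real polynomial of degree 3q from the kagome Chambers formula P_K(θ₁,θ₂,ω,λ) = Q_ω(λ) + 2 p^△(q(θ₁+pπ), q(θ₂+pπ))(λ + 2cos(3ω - γ/8))^q. Then there exists a real number λ that is an eigenvalue of M_K(θ₁,θ₂,ω) for every (θ₁,θ₂) ∈ ℝ² (a flat band) if and only if Q_ω(-2cos(3ω - γ/8)) = 0; in that case the flat band value is λ = -2cos(3ω - γ/8). -/

import Mathlib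

noncomputable section

open Matrix Complex

/-- `J_{p,q}` : the `q × q` diagonal matrix with diagonal entries `e^{i(j-1)γ}`, `j = 1,…,q`,
where `γ = 2πp/q`. -/
def Jmat (p : ℤ) (q : ℕ) : Matrix (Fin q) (Fin q) ℂ :=
  Matrix.diagonal fun j => Complex.exp (Complex.I * ((j : ℕ) : ℂ) *
    ((2 * Real.pi * (p : ℝ) / (q : ℝ) : ℝ) : ℂ))

/-- `K_q` : the `q × q` cyclic shift matrix, `(K_q)_{jk} = 1` if `k ≡ j+1 [q]`, `0` otherwise. -/
def Kmat (q : ℕ) : Matrix (Fin q) (Fin q) ℂ :=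
  Matrix.of fun j k => if ((j : ℕ) + 1) % q = (k : ℕ) then 1 else 0

/-- Block `A(θ₁,θ₂,ω) = e^{i(ω+γ/8)}(e^{-iθ₁}J* + e^{-iγ/2}e^{-i(θ₁-θ₂)}J*K)`. -/
def AK (p : ℤ) (q : ℕ) (θ₁ θ₂ ω : ℝ) : Matrix (Fin q) (Fin q) ℂ :=
  Complex.exp (Complex.I * ((ω + 2 * Real.pi * (p : ℝ) / (q : ℝ) / 8 : ℝ) : ℂ)) •
    (Complex.exp (-(Complex.I) * (θ₁ : ℂ)) • (Jmat p q)ᴴ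
      + (Complex.exp (-(Complex.I) * ((2 * Real.pi * (p : ℝ) / (q : ℝ) / 2 : ℝ) : ℂ)) *
          Complex.exp (-(Complex.I) * ((θ₁ - θ₂ : ℝ) : ℂ))) • ((Jmat p q)ᴴ * Kmat q))

/-- Block `B(θ₁,θ₂,ω) = e^{-i(ω+γ/8)}(e^{-iθ₁}J* + e^{-iθ₂}K*)`. -/
def BK (p : ℤ) (q : ℕ) (θ₁ θ₂ ω : ℝ) : Matrix (Fin q) (Fin q) ℂ :=
  Complex.exp (-(Complex.I) * ((ω + 2 * Real.pi * (p : ℝ) / (q : ℝ) / 8 : ℝ) : ℂ)) •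
    (Complex.exp (-(Complex.I) * (θ₁ : ℂ)) • (Jmat p q)ᴴ
      + Complex.exp (-(Complex.I) * (θ₂ : ℂ)) • (Kmat q)ᴴ)

/-- Block `C(θ₁,θ₂,ω) = e^{i(ω+γ/8)}(e^{-iγ/2}e^{i(θ₁-θ₂)}JK* + e^{-iθ₂}K*)`. -/
def CK (p : ℤ) (q : ℕ) (θ₁ θ₂ ω : ℝ) : Matrix (Fin q) (Fin q) ℂ :=
  Complex.exp (Complex.I * ((ω + 2 * Real.pi * (p : ℝ) / (q : ℝ) / 8 : ℝ) : ℂ)) •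
    ((Complex.exp (-(Complex.I) * ((2 * Real.pi * (p : ℝ) / (q : ℝ) / 2 : ℝ) : ℂ)) *
        Complex.exp (Complex.I * ((θ₁ - θ₂ : ℝ) : ℂ))) • (Jmat p q * (Kmat q)ᴴ)
      + Complex.exp (-(Complex.I) * (θ₂ : ℂ)) • (Kmat q)ᴴ)

/-- The Hou (kagome) matrix : the `3q × 3q` block matrix `[[0,A,B],[A*,0,C],[B*,C*,0]]`,
indexed by `Fin 3 × Fin q` (first component = block index). -/
def MK (p : ℤ) (q : ℕ) (θ₁ θ₂ ω : ℝ) : Matrix (Fin 3 × Fin q) (Fin 3 × Fin q) ℂ :=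
  Matrix.of fun x y =>
    (![![0, AK p q θ₁ θ₂ ω, BK p q θ₁ θ₂ ω],
       ![(AK p q θ₁ θ₂ ω)ᴴ, 0, CK p q θ₁ θ₂ ω],
       ![(BK p q θ₁ θ₂ ω)ᴴ, (CK p q θ₁ θ₂ ω)ᴴ, 0]] x.1 y.1) x.2 y.2

/-- The characteristic polynomial `P_K(θ₁,θ₂,ω,λ) = det(M_K(θ₁,θ₂,ω) - λ I_{3q})`. -/
def PK (p : ℤ) (q : ℕ) (θ₁ θ₂ ω : ℝ) (l : ℂ) : ℂ :=
  Matrix.det (MK p q θ₁ θ₂ ω - l • (1 : Matrix (Fin 3 × Fin q) (Fin 3 × Fin q) ℂ))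

/-- `p^△(x,ξ) = cos x + cos ξ + cos(x-ξ)`. -/
def ptri (x ξ : ℝ) : ℝ := Real.cos x + Real.cos ξ + Real.cos (x - ξ)

theorem stmt_14 (p : ℤ) (q : ℕ) (hq : 0 < q) (hpq : Int.gcd p (q : ℤ) = 1) (ω : ℝ)
    (Q : Polynomial ℝ)
    (hQ : ∀ (θ₁ θ₂ : ℝ) (l : ℂ),
      PK p q θ₁ θ₂ ω l =
        Polynomial.aeval l Q
          + 2 * ((ptri ((q : ℝ) * (θ₁ + p * Real.pi)) ((q : ℝ) * (θ₂ + p * Real.pi)) : ℝ) : ℂ)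
            * (l + ((2 * Real.cos (3 * ω - 2 * Real.pi * (p : ℝ) / (q : ℝ) / 8) : ℝ) : ℂ)) ^ q) :
    ((∃ l : ℝ, ∀ θ₁ θ₂ : ℝ, PK p q θ₁ θ₂ ω (l : ℂ) = 0) ↔
        Polynomial.eval (-(2 * Real.cos (3 * ω - 2 * Real.pi * (p : ℝ) / (q : ℝ) / 8))) Q = 0) ∧
    ∀ l : ℝ, (∀ θ₁ θ₂ : ℝ, PK p q θ₁ θ₂ ω (l : ℂ) = 0) →
      l = -(2 * Real.cos (3 * ω - 2 * Real.pi * (p : ℝ) / (q : ℝ) / 8)) := by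

  set c : ℝ := 2 * Real.cos (3 * ω - 2 * Real.pi * (p : ℝ) / (q : ℝ) / 8) with hc
  have hq0 : (q : ℝ) ≠ 0 := Nat.cast_ne_zero.mpr hq.ne'
  have haev : (Polynomial.aeval ((-c : ℝ) : ℂ)) Q = ((Polynomial.eval (-c) Q : ℝ) : ℂ) := by
    rw [show ((-c : ℝ) : ℂ) = algebraMap ℝ ℂ (-c) from rfl,
      Polynomial.aeval_algebraMap_apply, Polynomial.aeval_def]
    simp [Polynomial.eval₂_eq_eval_map]
  have key : ∀ l : ℝ, (∀ θ₁ θ₂ : ℝ, PK p q θ₁ θ₂ ω (l : ℂ) = 0) →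
      l = -c ∧ Polynomial.eval (-c) Q = 0 := by
    intro l h
    have h1 := h (-p * Real.pi) (-p * Real.pi)
    have h2 := h (-p * Real.pi + Real.pi / q) (-p * Real.pi)
    rw [hQ] at h1 h2
    have e0 : (q : ℝ) * ((-p * Real.pi) + p * Real.pi) = 0 := by ring
    have e1 : (q : ℝ) * ((-p * Real.pi + Real.pi / q) + p * Real.pi) = Real.pi := by
      field_simp
      ring
    rw [e0] at h1 h2
    rw [e1] at h2
    have p1 : ptri 0 0 = 3 := by simp [ptri]; norm_num
    have p2 : ptri Real.pi 0 = -1 := by simp [ptri]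
    rw [p1] at h1
    rw [p2] at h2
    have hsub : (8 : ℂ) * ((l : ℂ) + (c : ℂ)) ^ q = 0 := by
      have := sub_eq_zero_of_eq (h1.trans h2.symm)
      push_cast at this ⊢
      linear_combination this
    have hpow : ((l : ℂ) + (c : ℂ)) ^ q = 0 := by
      have h8 : (8 : ℂ) ≠ 0 := by norm_num
      exact (mul_eq_zero.mp hsub).resolve_left h8
    have hlc : (l : ℂ) + (c : ℂ) = 0 := pow_eq_zero_iff hq.ne' |>.mp hpow
    have hl : l = -c := by
      have := eq_neg_of_add_eq_zero_left hlc
      exact_mod_cast this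
    constructor
    · exact hl
    · have : (Polynomial.aeval ((l : ℝ) : ℂ)) Q = 0 := by
        rw [hpow] at h1; simpa using h1
      rw [hl, haev] at this
      exact_mod_cast this
  constructor
  · constructor
    · rintro ⟨l, h⟩
      exact (key l h).2
    · intro hQ0
      refine ⟨-c, fun θ₁ θ₂ => ?_⟩
      rw [hQ]
      have : ((-c : ℝ) : ℂ) + (c : ℂ) = 0 := by push_cast; ring
      rw [this, zero_pow hq.ne', haev, hQ0]
      simp
  · intro l h
    exact (key l h).1
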